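/- Let T be an expandable tree (γ_T > 1) and let 𝒯 ⊆ {0,1}^T be a tree-shift. Then the entropy h(𝒯) is positive if and only if the surface entropy h^{(S)}(𝒯) is positive. -/

import Mathlib

open Filter

/-- A (rooted, locally finite) tree realized as a set of finite words over the
`d` generators: it contains the root (the empty word) and is closed under prefixes. -/
def IsTree {d : ℕ} (T : Set (List (Fin d))) : Prop :=
  ([] : List (Fin d)) ∈ T ∧ ∀ w ∈ T, ∀ u : List (Fin d), u <+: w → u ∈ T

/-- `T_n`: the set of vertices of `T` at distance `n` from the root. -/
def level {d : ℕ} (T : Set (List (Fin d))) (n : ℕ) : Set (List (Fin d)) :=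
  {w ∈ T | w.length = n}

/-- `Δ_n = ∪_{i=0}^n T_i`: the set of vertices of `T` at distance at most `n`. -/
def ball {d : ℕ} (T : Set (List (Fin d))) (n : ℕ) : Set (List (Fin d)) :=
  {w ∈ T | w.length ≤ n}

/-- The statement that the expanding number `γ_T = lim_n |T_{n+1}|/|T_n|` exists
and equals `γ`. -/
def HasExpandingNumber {d : ℕ} (T : Set (List (Fin d))) (γ : ℝ) : Prop :=
  Tendsto (fun n : ℕ => ((level T (n + 1)).ncard : ℝ) / ((level T n).ncard : ℝ)) atTop (nhds γ)

/-- `|P(Δ_n, 𝒯)|`: the number of restrictions of labeled trees of `𝒯` to `Δ_n`. -/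
noncomputable def ballBlockCount {d : ℕ} {A : Type*} (T : Set (List (Fin d)))
    (𝒯 : Set (List (Fin d) → A)) (n : ℕ) : ℕ :=
  Set.ncard ((fun t (w : ball T n) => t (w : List (Fin d))) '' 𝒯)

/-- The entropy of a tree-shift, `h(𝒯) = limsup_n log |P(Δ_n,𝒯)| / |Δ_n|`. -/
noncomputable def treeEntropy {d : ℕ} {A : Type*} (T : Set (List (Fin d)))
    (𝒯 : Set (List (Fin d) → A)) : ℝ :=
  limsup (fun n : ℕ => Real.log (ballBlockCount T 𝒯 n) / ((ball T n).ncard : ℝ)) atTop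

/-- `S` is an independence set for `𝒯`: every assignment of symbols on `S`
extends to an element of `𝒯`. -/
def IsIndepSet {I A : Type*} (𝒯 : Set (I → A)) (S : Set I) : Prop :=
  ∀ u : I → A, ∃ t ∈ 𝒯, ∀ w ∈ S, t w = u w

/-- `𝒯` is a tree-shift on `T`: the set of labelings of `T` avoiding every pattern
from some set `F` of forbidden finite patterns (a pattern is a finitely supported
partial labeling; it appears in `t` at a vertex `g ∈ T` if every cell of the pattern,
translated to sit below `g`, lies in `T` and carries the prescribed label). -/
def IsTreeShift {d : ℕ} {A : Type*} (T : Set (List (Fin d)))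
    (𝒯 : Set (List (Fin d) → A)) : Prop :=
  ∃ F : Set (List (Fin d) → Option A),
    (∀ p ∈ F, {w | p w ≠ none}.Finite) ∧
    𝒯 = {t | ∀ p ∈ F, ∀ g ∈ T,
          ¬ ∀ w : List (Fin d), ∀ a : A, p w = some a → g ++ w ∈ T ∧ t (g ++ w) = a}

/-- `|B_n^{(S)}(𝒯)|`: the number of restrictions of labeled trees of `𝒯` to `T_n`. -/
noncomputable def levelBlockCount {d : ℕ} {A : Type*} (T : Set (List (Fin d)))
    (𝒯 : Set (List (Fin d) → A)) (n : ℕ) : ℕ :=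
  Set.ncard ((fun t (w : level T n) => t (w : List (Fin d))) '' 𝒯)

/-- The surface entropy of a tree-shift,
`h^{(S)}(𝒯) = limsup_n log |B_n^{(S)}(𝒯)| / |T_n|`. -/
noncomputable def surfaceEntropy {d : ℕ} {A : Type*} (T : Set (List (Fin d)))
    (𝒯 : Set (List (Fin d) → A)) : ℝ :=
  limsup (fun n : ℕ => Real.log (levelBlockCount T 𝒯 n) / ((level T n).ncard : ℝ)) atTop

set_option maxHeartbeats 1000000

namespace TreeShiftAux

variable {d : ℕ} {T : Set (List (Fin d))} {𝒯 : Set (List (Fin d) → Bool)}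

lemma level_finite (T : Set (List (Fin d))) (n : ℕ) : (level T n).Finite :=
  (List.finite_length_eq (Fin d) n).subset (fun _ hw => hw.2)

lemma ball_finite (T : Set (List (Fin d))) (n : ℕ) : (ball T n).Finite :=
  (List.finite_length_le (Fin d) n).subset (fun _ hw => hw.2)

lemma ball_zero (T : Set (List (Fin d))) : ball T 0 = level T 0 := by
  ext w; simp [ball, level, Nat.le_zero]

lemma ball_succ (T : Set (List (Fin d))) (n : ℕ) :
    ball T (n + 1) = ball T n ∪ level T (n + 1) := by
  ext w
  simp only [ball, level, Set.mem_setOf_eq, Set.mem_union, Nat.le_add_one_iff]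
  tauto

lemma disjoint_ball_level (T : Set (List (Fin d))) (n : ℕ) :
    Disjoint (ball T n) (level T (n + 1)) := by
  rw [Set.disjoint_left]
  rintro w ⟨-, hl⟩ ⟨-, hl'⟩
  omega

lemma ncard_ball (T : Set (List (Fin d))) (n : ℕ) :
    (ball T n).ncard = ∑ i ∈ Finset.range (n + 1), (level T i).ncard := by
  induction n with
  | zero => simp [ball_zero]
  | succ n ih =>
      rw [Finset.sum_range_succ, ← ih, ball_succ,
        Set.ncard_union_eq (disjoint_ball_level T n) (ball_finite T n) (level_finite T (n + 1))]

end TreeShiftAux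

namespace TreeShiftAux

variable {d : ℕ} {T : Set (List (Fin d))} {𝒯 : Set (List (Fin d) → Bool)} {γ : ℝ}

lemma level_nonempty (hT : IsTree T) (hγ : HasExpandingNumber T γ) (hγ1 : 1 < γ)
    (n : ℕ) : (level T n).Nonempty := by
  by_contra hemp
  rw [Set.not_nonempty_iff_eq_empty] at hemp
  have hall : ∀ m, n ≤ m → level T m = ∅ := by
    intro m hm
    rw [Set.eq_empty_iff_forall_notMem]
    rintro w ⟨hwT, hwl⟩
    have htake : w.take n ∈ level T n := by
      refine ⟨hT.2 w hwT _ (List.take_prefix n w), ?_⟩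
      simp [List.length_take, hwl]
      omega
    rw [hemp] at htake
    exact htake
  have h0 : Tendsto (fun n : ℕ => ((level T (n + 1)).ncard : ℝ) / ((level T n).ncard : ℝ))
      atTop (nhds 0) := by
    apply Tendsto.congr' _ tendsto_const_nhds
    filter_upwards [eventually_ge_atTop n] with m hm
    rw [hall m hm, hall (m + 1) (by omega)]
    simp
  have := tendsto_nhds_unique hγ h0
  linarith

lemma one_le_ncard_level (hT : IsTree T) (hγ : HasExpandingNumber T γ) (hγ1 : 1 < γ)
    (n : ℕ) : 1 ≤ (level T n).ncard :=
  (Set.ncard_pos (level_finite T n)).mpr (level_nonempty hT hγ hγ1 n)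

lemma succ_le_ncard_ball (hT : IsTree T) (hγ : HasExpandingNumber T γ) (hγ1 : 1 < γ)
    (n : ℕ) : n + 1 ≤ (ball T n).ncard := by
  rw [ncard_ball]
  calc n + 1 = ∑ _i ∈ Finset.range (n + 1), 1 := by simp
    _ ≤ _ := Finset.sum_le_sum fun i _ => one_le_ncard_level hT hγ hγ1 i

end TreeShiftAux

namespace TreeShiftAux

variable {d : ℕ} {T : Set (List (Fin d))} {𝒯 : Set (List (Fin d) → Bool)}

lemma ballImage_finite (T : Set (List (Fin d))) (𝒯 : Set (List (Fin d) → Bool)) (n : ℕ) :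
    ((fun t (w : ball T n) => t (w : List (Fin d))) '' 𝒯).Finite := by
  haveI := (ball_finite T n).to_subtype
  exact Set.toFinite _

lemma levelImage_finite (T : Set (List (Fin d))) (𝒯 : Set (List (Fin d) → Bool)) (n : ℕ) :
    ((fun t (w : level T n) => t (w : List (Fin d))) '' 𝒯).Finite := by
  haveI := (level_finite T n).to_subtype
  exact Set.toFinite _

lemma one_le_ballBlockCount (h : 𝒯.Nonempty) (n : ℕ) : 1 ≤ ballBlockCount T 𝒯 n :=
  (Set.ncard_pos (ballImage_finite T 𝒯 n)).mpr (h.image _)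

lemma one_le_levelBlockCount (h : 𝒯.Nonempty) (n : ℕ) : 1 ≤ levelBlockCount T 𝒯 n :=
  (Set.ncard_pos (levelImage_finite T 𝒯 n)).mpr (h.image _)

lemma ballBlockCount_le_pow (n : ℕ) : ballBlockCount T 𝒯 n ≤ 2 ^ (ball T n).ncard := by
  haveI := (ball_finite T n).to_subtype
  calc ballBlockCount T 𝒯 n ≤ (Set.univ : Set (ball T n → Bool)).ncard :=
        Set.ncard_le_ncard (Set.subset_univ _) Set.finite_univ
    _ = Nat.card (ball T n → Bool) := Set.ncard_univ _
    _ = 2 ^ (ball T n).ncard := by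
        rw [Nat.card_fun, Nat.card_eq_fintype_card (α := Bool), Nat.card_coe_set_eq]
        rfl

lemma levelBlockCount_le_pow (n : ℕ) : levelBlockCount T 𝒯 n ≤ 2 ^ (level T n).ncard := by
  haveI := (level_finite T n).to_subtype
  calc levelBlockCount T 𝒯 n ≤ (Set.univ : Set (level T n → Bool)).ncard :=
        Set.ncard_le_ncard (Set.subset_univ _) Set.finite_univ
    _ = Nat.card (level T n → Bool) := Set.ncard_univ _
    _ = 2 ^ (level T n).ncard := by
        rw [Nat.card_fun, Nat.card_eq_fintype_card (α := Bool), Nat.card_coe_set_eq]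
        rfl

lemma levelBlockCount_le_ballBlockCount (n : ℕ) :
    levelBlockCount T 𝒯 n ≤ ballBlockCount T 𝒯 n := by
  have hsub : ∀ w : List (Fin d), w ∈ level T n → w ∈ ball T n :=
    fun w hw => ⟨hw.1, le_of_eq hw.2⟩
  have key : (fun t (w : level T n) => t (w : List (Fin d))) '' 𝒯
      = (fun (u : ball T n → Bool) (w : level T n) => u ⟨(w : List (Fin d)), hsub _ w.2⟩) ''
        ((fun t (w : ball T n) => t (w : List (Fin d))) '' 𝒯) := by
    rw [Set.image_image]
  rw [levelBlockCount, key]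
  exact Set.ncard_image_le (ballImage_finite T 𝒯 n)

end TreeShiftAux

namespace TreeShiftAux

variable {d : ℕ} {T : Set (List (Fin d))} {𝒯 : Set (List (Fin d) → Bool)}

lemma ncard_prod {α β : Type*} (s : Set α) (t : Set β) :
    (s ×ˢ t).ncard = s.ncard * t.ncard := by
  rw [← Nat.card_coe_set_eq, ← Nat.card_coe_set_eq, ← Nat.card_coe_set_eq,
    Nat.card_congr (Equiv.Set.prod s t), Nat.card_prod]

lemma ballBlockCount_zero : ballBlockCount T 𝒯 0 = levelBlockCount T 𝒯 0 := by
  unfold ballBlockCount levelBlockCount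
  rw [ball_zero]

lemma ballBlockCount_succ_le (n : ℕ) :
    ballBlockCount T 𝒯 (n + 1) ≤ ballBlockCount T 𝒯 n * levelBlockCount T 𝒯 (n + 1) := by
  have hsub1 : ∀ w : List (Fin d), w ∈ ball T n → w ∈ ball T (n + 1) :=
    fun w hw => ⟨hw.1, hw.2.trans (Nat.le_succ n)⟩
  have hsub2 : ∀ w : List (Fin d), w ∈ level T (n + 1) → w ∈ ball T (n + 1) :=
    fun w hw => ⟨hw.1, le_of_eq hw.2⟩
  set f : (ball T (n + 1) → Bool) → (ball T n → Bool) × (level T (n + 1) → Bool) :=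
    fun u => (fun w => u ⟨(w : List (Fin d)), hsub1 _ w.2⟩,
              fun w => u ⟨(w : List (Fin d)), hsub2 _ w.2⟩) with hf
  have hinj : Function.Injective f := by
    intro u v huv
    funext ⟨w, hwT, hwl⟩
    rcases Nat.le_add_one_iff.mp hwl with h | h
    · exact congrFun (congrArg Prod.fst huv) ⟨w, hwT, h⟩
    · exact congrFun (congrArg Prod.snd huv) ⟨w, hwT, h⟩
  have hmaps : f '' ((fun t (w : ball T (n + 1)) => t (w : List (Fin d))) '' 𝒯) ⊆
      ((fun t (w : ball T n) => t (w : List (Fin d))) '' 𝒯) ×ˢ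
      ((fun t (w : level T (n + 1)) => t (w : List (Fin d))) '' 𝒯) := by
    rw [Set.image_image]
    rintro _ ⟨t, ht, rfl⟩
    exact ⟨⟨t, ht, rfl⟩, ⟨t, ht, rfl⟩⟩
  calc ballBlockCount T 𝒯 (n + 1)
      = (f '' ((fun t (w : ball T (n + 1)) => t (w : List (Fin d))) '' 𝒯)).ncard :=
        (Set.ncard_image_of_injective _ hinj).symm
    _ ≤ (((fun t (w : ball T n) => t (w : List (Fin d))) '' 𝒯) ×ˢ
          ((fun t (w : level T (n + 1)) => t (w : List (Fin d))) '' 𝒯)).ncard :=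
        Set.ncard_le_ncard hmaps
          ((ballImage_finite T 𝒯 n).prod (levelImage_finite T 𝒯 (n + 1)))
    _ = _ := by unfold ballBlockCount levelBlockCount; exact ncard_prod _ _

lemma log_ballBlockCount_le (h : 𝒯.Nonempty) (n : ℕ) :
    Real.log (ballBlockCount T 𝒯 n) ≤
      ∑ i ∈ Finset.range (n + 1), Real.log (levelBlockCount T 𝒯 i) := by
  induction n with
  | zero => simp [ballBlockCount_zero]
  | succ n ih =>
      rw [Finset.sum_range_succ]
      calc Real.log (ballBlockCount T 𝒯 (n + 1))
          ≤ Real.log (ballBlockCount T 𝒯 n * levelBlockCount T 𝒯 (n + 1)) := by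
            apply Real.log_le_log
            · exact_mod_cast Nat.lt_of_lt_of_le Nat.zero_lt_one (one_le_ballBlockCount h (n + 1))
            · exact_mod_cast ballBlockCount_succ_le n
        _ = Real.log (ballBlockCount T 𝒯 n) + Real.log (levelBlockCount T 𝒯 (n + 1)) := by
            apply Real.log_mul
            · have := one_le_ballBlockCount (T := T) h n; positivity
            · have := one_le_levelBlockCount (T := T) h (n + 1); positivity
        _ ≤ _ := by linarith [ih]

end TreeShiftAux

namespace TreeShiftAux

variable {d : ℕ} {T : Set (List (Fin d))} {γ : ℝ}

lemma exists_level_ge_ball (hT : IsTree T) (hγ : HasExpandingNumber T γ) (hγ1 : 1 < γ) :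
    ∃ c : ℝ, 0 < c ∧ ∀ᶠ n in atTop,
      c * ((ball T n).ncard : ℝ) ≤ ((level T n).ncard : ℝ) := by
  set a : ℕ → ℝ := fun n => ((level T n).ncard : ℝ) with ha
  have ha1 : ∀ n, 1 ≤ a n := by
    intro n
    have := one_le_ncard_level hT hγ hγ1 n
    simp only [ha]
    exact_mod_cast this
  have hapos : ∀ n, 0 < a n := fun n => lt_of_lt_of_le one_pos (ha1 n)
  set q : ℝ := (γ + 1) / 2 with hqdef
  have hq1 : 1 < q := by rw [hqdef]; linarith
  have hqγ : q < γ := by rw [hqdef]; linarith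
  obtain ⟨N, hN⟩ := eventually_atTop.mp (hγ.eventually (eventually_ge_nhds hqγ))
  have hstep : ∀ n, N ≤ n → q * a n ≤ a (n + 1) := by
    intro n hn
    have := hN n hn
    rw [le_div_iff₀ (hapos n)] at this
    linarith
  set K : ℝ := q / (q - 1) with hKdef
  have hKq : K * (q - 1) = q := by
    rw [hKdef]; exact div_mul_cancel₀ q (by linarith)
  have hK1 : 1 ≤ K := by nlinarith
  have hKpos : 0 < K := lt_of_lt_of_le one_pos hK1
  -- the tail sum is bounded by K * a n
  have hKclaim : ∀ n, N ≤ n → ∑ i ∈ Finset.Ico N (n + 1), a i ≤ K * a n := by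
    intro n hn
    induction n, hn using Nat.le_induction with
    | base =>
        rw [Nat.Ico_succ_singleton, Finset.sum_singleton]
        nlinarith [hapos N]
    | succ n hn ih =>
        rw [Finset.sum_Ico_succ_top (by omega)]
        have h1 : q * a n ≤ a (n + 1) := hstep n hn
        nlinarith [hapos n, hapos (n + 1)]
  -- geometric growth
  have hgrow : ∀ n, N ≤ n → q ^ (n - N) ≤ a n := by
    intro n hn
    induction n, hn using Nat.le_induction with
    | base => simpa using ha1 N
    | succ n hn ih =>
        have : n + 1 - N = (n - N) + 1 := by omega
        rw [this, pow_succ]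
        calc q ^ (n - N) * q ≤ a n * q := by
              apply mul_le_mul_of_nonneg_right ih (by linarith)
          _ = q * a n := mul_comm _ _
          _ ≤ a (n + 1) := hstep n hn
  set C : ℝ := ∑ i ∈ Finset.range N, a i with hCdef
  have htend : Tendsto (fun n : ℕ => q ^ (n - N)) atTop atTop :=
    (tendsto_pow_atTop_atTop_of_one_lt hq1).comp (tendsto_sub_atTop_nat N)
  refine ⟨(K + 1)⁻¹, by positivity, ?_⟩
  filter_upwards [eventually_ge_atTop N, htend.eventually_ge_atTop C] with n hn hC
  have hsum : ((ball T n).ncard : ℝ) = ∑ i ∈ Finset.range (n + 1), a i := by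
    rw [ncard_ball]; push_cast; rfl
  have hsplit : ∑ i ∈ Finset.range (n + 1), a i
      = C + ∑ i ∈ Finset.Ico N (n + 1), a i := by
    rw [hCdef]; simp only [Finset.range_eq_Ico]
    exact (Finset.sum_Ico_consecutive _ (Nat.zero_le N) (by omega)).symm
  have hCa : C ≤ a n := le_trans hC (hgrow n hn)
  have : ((ball T n).ncard : ℝ) ≤ (K + 1) * a n := by
    rw [hsum, hsplit]
    have := hKclaim n hn
    linarith
  rw [inv_mul_le_iff₀ (by positivity)]
  calc ((ball T n).ncard : ℝ) ≤ (K + 1) * a n := this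
    _ = (K + 1) * ((level T n).ncard : ℝ) := rfl

end TreeShiftAux

open TreeShiftAux

/-- For a tree-shift `𝒯 ⊆ {0,1}^T` on an expandable tree
(`γ_T > 1`), the entropy is positive iff the surface entropy is positive. -/
theorem pos_entropy_iff_pos_surfaceEntropy
    (d : ℕ) (T : Set (List (Fin d))) (hT : IsTree T)
    (γ : ℝ) (hγ : HasExpandingNumber T γ) (hγ1 : 1 < γ)
    (𝒯 : Set (List (Fin d) → Bool)) (h𝒯 : IsTreeShift T 𝒯) :
    0 < treeEntropy T 𝒯 ↔ 0 < surfaceEntropy T 𝒯 := by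
  by_cases hne : 𝒯.Nonempty
  case neg =>
    rw [Set.not_nonempty_iff_eq_empty] at hne
    subst hne
    have h1 : treeEntropy T (∅ : Set (List (Fin d) → Bool)) = 0 := by
      have : (fun n : ℕ => Real.log (ballBlockCount T (∅ : Set (List (Fin d) → Bool)) n) /
          ((ball T n).ncard : ℝ)) = fun _ => (0 : ℝ) := by
        funext n
        simp [ballBlockCount]
      rw [treeEntropy, this, limsup_const]
    have h2 : surfaceEntropy T (∅ : Set (List (Fin d) → Bool)) = 0 := by
      have : (fun n : ℕ => Real.log (levelBlockCount T (∅ : Set (List (Fin d) → Bool)) n) /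
          ((level T n).ncard : ℝ)) = fun _ => (0 : ℝ) := by
        funext n
        simp [levelBlockCount]
      rw [surfaceEntropy, this, limsup_const]
    rw [h1, h2]
  case pos =>
  set aterm : ℕ → ℝ :=
    fun n => Real.log (ballBlockCount T 𝒯 n) / ((ball T n).ncard : ℝ) with haterm
  set bterm : ℕ → ℝ :=
    fun n => Real.log (levelBlockCount T 𝒯 n) / ((level T n).ncard : ℝ) with hbterm
  have htree : treeEntropy T 𝒯 = limsup aterm atTop := rfl
  have hsurf : surfaceEntropy T 𝒯 = limsup bterm atTop := rfl
  have hspos : ∀ n, (0 : ℝ) < ((ball T n).ncard : ℝ) := by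
    intro n
    have := succ_le_ncard_ball hT hγ hγ1 n
    have : (1 : ℕ) ≤ (ball T n).ncard := by omega
    exact_mod_cast Nat.lt_of_lt_of_le Nat.zero_lt_one this
  have htpos : ∀ n, (0 : ℝ) < ((level T n).ncard : ℝ) := by
    intro n
    have := one_le_ncard_level hT hγ hγ1 n
    exact_mod_cast Nat.lt_of_lt_of_le Nat.zero_lt_one this
  have hlogb0 : ∀ n, (0 : ℝ) ≤ Real.log (ballBlockCount T 𝒯 n) := by
    intro n
    apply Real.log_nonneg
    exact_mod_cast one_le_ballBlockCount hne n
  have hlogl0 : ∀ n, (0 : ℝ) ≤ Real.log (levelBlockCount T 𝒯 n) := by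
    intro n
    apply Real.log_nonneg
    exact_mod_cast one_le_levelBlockCount hne n
  have hloglb : ∀ n, Real.log (levelBlockCount T 𝒯 n) ≤ Real.log (ballBlockCount T 𝒯 n) := by
    intro n
    apply Real.log_le_log
    · exact_mod_cast Nat.lt_of_lt_of_le Nat.zero_lt_one (one_le_levelBlockCount hne n)
    · exact_mod_cast levelBlockCount_le_ballBlockCount n
  have ha0 : ∀ n, 0 ≤ aterm n := fun n => div_nonneg (hlogb0 n) (hspos n).le
  have hb0 : ∀ n, 0 ≤ bterm n := fun n => div_nonneg (hlogl0 n) (htpos n).le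
  have ha2 : ∀ n, aterm n ≤ Real.log 2 := by
    intro n
    rw [haterm, div_le_iff₀ (hspos n)]
    calc Real.log (ballBlockCount T 𝒯 n) ≤ Real.log ((2 : ℝ) ^ (ball T n).ncard) := by
          apply Real.log_le_log
          · exact_mod_cast Nat.lt_of_lt_of_le Nat.zero_lt_one (one_le_ballBlockCount hne n)
          · exact_mod_cast ballBlockCount_le_pow (T := T) (𝒯 := 𝒯) n
      _ = Real.log 2 * ((ball T n).ncard : ℝ) := by rw [Real.log_pow]; ring
  have hb2 : ∀ n, bterm n ≤ Real.log 2 := by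
    intro n
    rw [hbterm, div_le_iff₀ (htpos n)]
    calc Real.log (levelBlockCount T 𝒯 n) ≤ Real.log ((2 : ℝ) ^ (level T n).ncard) := by
          apply Real.log_le_log
          · exact_mod_cast Nat.lt_of_lt_of_le Nat.zero_lt_one (one_le_levelBlockCount hne n)
          · exact_mod_cast levelBlockCount_le_pow (T := T) (𝒯 := 𝒯) n
      _ = Real.log 2 * ((level T n).ncard : ℝ) := by rw [Real.log_pow]; ring
  have habd : IsBoundedUnder (· ≤ ·) atTop aterm :=
    isBoundedUnder_of ⟨Real.log 2, ha2⟩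
  have hbbd : IsBoundedUnder (· ≤ ·) atTop bterm :=
    isBoundedUnder_of ⟨Real.log 2, hb2⟩
  have hacb : IsCoboundedUnder (· ≤ ·) atTop aterm :=
    IsCoboundedUnder.of_frequently_ge ((Eventually.of_forall ha0).frequently)
  have hbcb : IsCoboundedUnder (· ≤ ·) atTop bterm :=
    IsCoboundedUnder.of_frequently_ge ((Eventually.of_forall hb0).frequently)
  constructor
  · -- entropy positive → surface entropy positive
    intro h
    by_contra hs
    rw [not_lt] at hs
    have hεbound : ∀ ε : ℝ, 0 < ε → treeEntropy T 𝒯 ≤ ε := by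
      intro ε hε
      have hlt : surfaceEntropy T 𝒯 < ε := lt_of_le_of_lt hs hε
      rw [hsurf] at hlt
      obtain ⟨N, hN⟩ := eventually_atTop.mp (eventually_lt_of_limsup_lt hlt hbbd)
      set C : ℝ := ∑ i ∈ Finset.range N, Real.log (levelBlockCount T 𝒯 i) with hCdef
      have hC0 : 0 ≤ C := Finset.sum_nonneg fun i _ => hlogl0 i
      have hkey : ∀ n, N ≤ n → aterm n ≤ C / ((ball T n).ncard : ℝ) + ε := by
        intro n hn
        have hlogsum : Real.log (ballBlockCount T 𝒯 n) ≤ C + ε * ((ball T n).ncard : ℝ) := by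
          calc Real.log (ballBlockCount T 𝒯 n)
              ≤ ∑ i ∈ Finset.range (n + 1), Real.log (levelBlockCount T 𝒯 i) :=
                log_ballBlockCount_le hne n
            _ = C + ∑ i ∈ Finset.Ico N (n + 1), Real.log (levelBlockCount T 𝒯 i) := by
                rw [hCdef]
                simp only [Finset.range_eq_Ico]
                exact (Finset.sum_Ico_consecutive _ (Nat.zero_le N) (by omega)).symm
            _ ≤ C + ∑ i ∈ Finset.Ico N (n + 1), ε * ((level T i).ncard : ℝ) := by
                gcongr with i hi
                have hib : bterm i < ε := hN i (Finset.mem_Ico.mp hi).1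
                rw [hbterm, div_lt_iff₀ (htpos i)] at hib
                exact hib.le
            _ ≤ C + ∑ i ∈ Finset.range (n + 1), ε * ((level T i).ncard : ℝ) := by
                apply add_le_add_right
                apply Finset.sum_le_sum_of_subset_of_nonneg
                · rw [Finset.range_eq_Ico]
                  exact Finset.Ico_subset_Ico (Nat.zero_le N) le_rfl
                · exact fun i _ _ => mul_nonneg hε.le (htpos i).le
            _ = C + ε * ((ball T n).ncard : ℝ) := by
                rw [← Finset.mul_sum, ncard_ball]
                push_cast
                ring
        rw [haterm]
        rw [div_le_iff₀ (hspos n)]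
        have : (C / ((ball T n).ncard : ℝ) + ε) * ((ball T n).ncard : ℝ)
            = C + ε * ((ball T n).ncard : ℝ) := by
          rw [add_mul, div_mul_cancel₀ _ (ne_of_gt (hspos n))]
        rw [this]
        exact hlogsum
      have htendC : Tendsto (fun n : ℕ => C / ((ball T n).ncard : ℝ) + ε) atTop (nhds ε) := by
        have h0 : Tendsto (fun n : ℕ => C / ((ball T n).ncard : ℝ)) atTop (nhds 0) := by
          apply squeeze_zero (fun n => div_nonneg hC0 (hspos n).le)
            (g := fun n : ℕ => C / (((n + 1 : ℕ)) : ℝ))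
          · intro n
            apply div_le_div_of_nonneg_left hC0 ?_ ?_
            · exact_mod_cast Nat.succ_pos n
            · have := succ_le_ncard_ball hT hγ hγ1 n
              exact_mod_cast this
          · exact (tendsto_const_div_atTop_nhds_zero_nat C).comp (tendsto_add_atTop_nat 1)
        simpa using h0.add tendsto_const_nhds
      rw [htree]
      calc limsup aterm atTop ≤ limsup (fun n : ℕ => C / ((ball T n).ncard : ℝ) + ε) atTop := by
            apply limsup_le_limsup _ hacb htendC.isBoundedUnder_le
            filter_upwards [eventually_ge_atTop N] with n hn
            exact hkey n hn
        _ = ε := htendC.limsup_eq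
    linarith [hεbound (treeEntropy T 𝒯 / 2) (by linarith)]
  · -- surface entropy positive → entropy positive
    intro hs
    obtain ⟨c, hc, hev⟩ := exists_level_ge_ball hT hγ hγ1
    have hfreq : ∃ᶠ n in atTop, surfaceEntropy T 𝒯 / 2 < bterm n := by
      apply frequently_lt_of_lt_limsup hbcb
      rw [← hsurf]
      linarith
    have hkey : ∃ᶠ n in atTop, c * (surfaceEntropy T 𝒯 / 2) ≤ aterm n := by
      apply (hfreq.and_eventually hev).mono
      rintro n ⟨h1, h2⟩
      have hL0 := hlogl0 n
      have h3 : c * (surfaceEntropy T 𝒯 / 2) ≤ c * bterm n :=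
        mul_le_mul_of_nonneg_left h1.le hc.le
      have h4 : c * bterm n ≤ Real.log (levelBlockCount T 𝒯 n) / ((ball T n).ncard : ℝ) := by
        rw [hbterm]
        rw [← mul_div_assoc, div_le_div_iff₀ (htpos n) (hspos n)]
        nlinarith [mul_le_mul_of_nonneg_left h2 hL0]
      have h5 : Real.log (levelBlockCount T 𝒯 n) / ((ball T n).ncard : ℝ) ≤ aterm n := by
        exact div_le_div_of_nonneg_right (hloglb n) (hspos n).le
      linarith
    have := le_limsup_of_frequently_le hkey habd
    rw [htree]
    have hpos : 0 < c * (surfaceEntropy T 𝒯 / 2) := by positivity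
    linarith
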